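/- Let k be a positive integer, let δ be an integer with 0 ≤ δ ≤ k−1 and k−1−δ even, let θ ∈ (0, π), and let t be a real number with |t| < 1. Assume θ satisfies the SU(2) Bethe ansatz equation at level k. Then ∑_{j=0}^{(k−1−δ)/2} t^j · ( sin((δ+2j+1)θ) − t·sin((δ+2j−1)θ) ) = Im( e^{i(δ+1)θ}·(1 − t·e^{−2iθ})/(1 − t·e^{2iθ}) ), where δ+2j−1 is interpreted as an integer (so sin((δ+2j−1)θ) = −sin θ when δ+2j = 0). (This is the evaluation of the sum W in the proof of the SU(2) fusion identity; the Bethe equation forces the tail term of the geometric series to be real.) -/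

import Mathlib

/-- Evaluation of the tail sum `W` in the proof of the SU(2) fusion identity.
Let `k > 0`, `0 ≤ δ ≤ k−1` with `k−1−δ` even, `θ ∈ (0, π)`, `|t| < 1`, and assume
the SU(2) Bethe ansatz equation at level `k`:
`e^{2i(k+2)θ}(1 − t e^{−2iθ})² = (1 − t e^{2iθ})²`. Then
`∑_{j=0}^{(k−1−δ)/2} t^j (sin((δ+2j+1)θ) − t sin((δ+2j−1)θ))
  = Im(e^{i(δ+1)θ}(1 − t e^{−2iθ})/(1 − t e^{2iθ}))`,
where `δ+2j−1` is interpreted as an integer. -/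
theorem fusion_sum_W (k : ℕ) (hk : 0 < k) (δ : ℕ) (hδ : δ ≤ k - 1)
    (heven : Even (k - 1 - δ)) (θ : ℝ) (hθ : θ ∈ Set.Ioo 0 Real.pi)
    (t : ℝ) (ht : |t| < 1)
    (hBethe : Complex.exp (2 * Complex.I * ((k : ℂ) + 2) * (θ : ℂ)) *
        (1 - (t : ℂ) * Complex.exp (-2 * Complex.I * (θ : ℂ))) ^ 2 =
        (1 - (t : ℂ) * Complex.exp (2 * Complex.I * (θ : ℂ))) ^ 2) :
    ∑ j ∈ Finset.range ((k - 1 - δ) / 2 + 1),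
      t ^ j * (Real.sin ((((δ : ℤ) + 2 * (j : ℤ) + 1 : ℤ) : ℝ) * θ) -
        t * Real.sin ((((δ : ℤ) + 2 * (j : ℤ) - 1 : ℤ) : ℝ) * θ))
    = (Complex.exp (Complex.I * ((δ : ℂ) + 1) * (θ : ℂ)) *
        (1 - (t : ℂ) * Complex.exp (-2 * Complex.I * (θ : ℂ))) /
        (1 - (t : ℂ) * Complex.exp (2 * Complex.I * (θ : ℂ)))).im := by
  set m := (k - 1 - δ) / 2 with hm
  set z : ℂ := Complex.exp ((θ : ℂ) * Complex.I) with hzdef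
  have hz0 : z ≠ 0 := Complex.exp_ne_zero _
  have hzpow : ∀ n : ℤ, z ^ n = Complex.exp ((n : ℂ) * θ * Complex.I) := by
    intro n
    rw [hzdef, ← Complex.exp_int_mul]
    ring_nf
  have him : ∀ n : ℤ, (z ^ n).im = Real.sin ((n : ℝ) * θ) := by
    intro n
    rw [hzpow]
    have h1 : ((n : ℂ) * θ * Complex.I) = (((n : ℝ) * θ : ℝ) : ℂ) * Complex.I := by
      push_cast; ring
    rw [h1, Complex.exp_ofReal_mul_I_im]
  have hzabs : ∀ n : ℤ, ‖z ^ n‖ = 1 := by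
    intro n
    rw [hzpow]
    have h1 : ((n : ℂ) * θ * Complex.I) = (((n : ℝ) * θ : ℝ) : ℂ) * Complex.I := by
      push_cast; ring
    rw [h1, Complex.norm_exp_ofReal_mul_I]
  -- identify exponentials with powers of z
  have he2 : Complex.exp (2 * Complex.I * (θ : ℂ)) = z ^ (2 : ℤ) := by
    rw [hzpow]; ring_nf
  have hem2 : Complex.exp (-2 * Complex.I * (θ : ℂ)) = z ^ (-2 : ℤ) := by
    rw [hzpow]; push_cast; ring_nf
  set u : ℂ := 1 - (t : ℂ) * z ^ (2 : ℤ) with hu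
  set v : ℂ := 1 - (t : ℂ) * z ^ (-2 : ℤ) with hv
  have habs : ∀ n : ℤ, ‖(t : ℂ) * z ^ n‖ < 1 := by
    intro n
    rw [norm_mul, hzabs, mul_one, Complex.norm_real, Real.norm_eq_abs]
    exact ht
  have hne1 : ∀ n : ℤ, (t : ℂ) * z ^ n ≠ 1 := by
    intro n h
    have := habs n
    rw [h, norm_one] at this
    exact lt_irrefl 1 this
  have hu0 : u ≠ 0 := by
    rw [hu, sub_ne_zero]
    exact fun h => hne1 2 h.symm
  have hv0 : v ≠ 0 := by
    rw [hv, sub_ne_zero]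
    exact fun h => hne1 (-2) h.symm
  -- exponent arithmetic
  have hmk : m * 2 + δ + 1 = k := by
    have h2 : m * 2 = k - 1 - δ := Nat.div_mul_cancel heven.two_dvd
    omega
  have hmkz : (m : ℤ) * 2 + (δ : ℤ) + 1 = (k : ℤ) := by exact_mod_cast hmk
  -- Bethe in terms of z, u, v
  have hB : z ^ (2 * ((k : ℤ) + 2)) * v ^ 2 = u ^ 2 := by
    rw [hu, hv, ← he2, ← hem2, hzpow]
    rw [← hBethe]
    congr 2
    push_cast; ring
  -- the tail term Q is real
  set Q : ℂ := z ^ ((δ : ℤ) + 1) * v * ((t : ℂ) * z ^ (2 : ℤ)) ^ (m + 1) / u with hQ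
  have hconjz : (starRingEnd ℂ) z = z ^ (-1 : ℤ) := by
    rw [hzdef, ← Complex.exp_conj, zpow_neg, zpow_one, ← Complex.exp_neg]
    congr 1
    simp [Complex.conj_I]
  have hconjzpow : ∀ n : ℤ, (starRingEnd ℂ) (z ^ n) = z ^ (-n) := by
    intro n
    rw [map_zpow₀, hconjz, ← zpow_mul, neg_one_mul]
  have hconju : (starRingEnd ℂ) u = v := by
    rw [hu, hv, map_sub, map_one, map_mul, Complex.conj_ofReal, hconjzpow]
  have hconjv : (starRingEnd ℂ) v = u := by
    rw [hu, hv, map_sub, map_one, map_mul, Complex.conj_ofReal, hconjzpow]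
    norm_num
  have hQreal : Q.im = 0 := by
    rw [← Complex.conj_eq_iff_im, hQ]
    rw [map_div₀, map_mul, map_mul, map_pow, map_mul, Complex.conj_ofReal,
      hconjzpow, hconjzpow, hconjv, hconju]
    set a := z ^ ((δ : ℤ) + 1) with ha
    set b := z ^ ((2 : ℤ) * (m + 1)) with hb
    have ha0 : a ≠ 0 := zpow_ne_zero _ hz0
    have hb0 : b ≠ 0 := zpow_ne_zero _ hz0
    have hna : z ^ (-((δ : ℤ) + 1)) = a⁻¹ := by rw [ha, ← zpow_neg]
    have hzm : (z ^ (-2 : ℤ)) ^ (m + 1) = b⁻¹ := by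
      rw [hb, ← zpow_neg, ← zpow_natCast (z ^ (-2 : ℤ)), ← zpow_mul]
      norm_cast
    have hzm2 : (z ^ (2 : ℤ)) ^ (m + 1) = b := by
      rw [hb, ← zpow_natCast (z ^ (2 : ℤ)), ← zpow_mul]
      norm_cast
    have hab : a ^ 2 * b ^ 2 = z ^ (2 * ((k : ℤ) + 2)) := by
      rw [ha, hb, sq, sq, ← zpow_add₀ hz0, ← zpow_add₀ hz0, ← zpow_add₀ hz0]
      congr 1; omega
    have hB' : a ^ 2 * b ^ 2 * v ^ 2 = u ^ 2 := by rw [hab]; exact hB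
    rw [mul_pow, mul_pow, hzm, hzm2, hna]
    rw [div_eq_div_iff hv0 hu0]
    clear_value a b u v
    field_simp
    linear_combination (-((t : ℂ)) ^ (m + 1)) * hB'
  -- compute the complex sum
  have hsum : ∑ j ∈ Finset.range (m + 1),
      ((t : ℂ) ^ j * (z ^ ((δ : ℤ) + 2 * (j : ℤ) + 1) - (t : ℂ) * z ^ ((δ : ℤ) + 2 * (j : ℤ) - 1)))
      = z ^ ((δ : ℤ) + 1) * v / u - Q := by
    have hterm : ∀ j ∈ Finset.range (m + 1),
        (t : ℂ) ^ j * (z ^ ((δ : ℤ) + 2 * (j : ℤ) + 1) - (t : ℂ) * z ^ ((δ : ℤ) + 2 * (j : ℤ) - 1))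
        = z ^ ((δ : ℤ) + 1) * v * ((t : ℂ) * z ^ (2 : ℤ)) ^ j := by
      intro j _
      rw [mul_pow, ← zpow_natCast (z ^ (2:ℤ)), ← zpow_mul]
      rw [hv]
      have h1 : z ^ ((δ : ℤ) + 2 * (j : ℤ) + 1) = z ^ ((δ:ℤ)+1) * z ^ ((2:ℤ) * j) := by
        rw [← zpow_add₀ hz0]; congr 1; ring
      have h2 : z ^ ((δ : ℤ) + 2 * (j : ℤ) - 1) = z ^ ((δ:ℤ)+1) * z ^ ((2:ℤ) * j) * z ^ (-2:ℤ) := by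
        rw [← zpow_add₀ hz0, ← zpow_add₀ hz0]; congr 1; ring
      rw [h1, h2]
      ring
    rw [Finset.sum_congr rfl hterm, ← Finset.mul_sum, geom_sum_eq (hne1 2), hQ]
    have hxu : (t : ℂ) * z ^ (2 : ℤ) - 1 = -u := by rw [hu]; ring
    rw [hxu, div_neg, mul_neg]
    field_simp
    ring
  -- put it together
  have hre : ∀ j ∈ Finset.range (m + 1),
      t ^ j * (Real.sin ((((δ : ℤ) + 2 * (j : ℤ) + 1 : ℤ) : ℝ) * θ) -
        t * Real.sin ((((δ : ℤ) + 2 * (j : ℤ) - 1 : ℤ) : ℝ) * θ))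
      = ((t : ℂ) ^ j * (z ^ ((δ : ℤ) + 2 * (j : ℤ) + 1) - (t : ℂ) * z ^ ((δ : ℤ) + 2 * (j : ℤ) - 1))).im := by
    intro j _
    rw [Complex.mul_im, Complex.sub_im, Complex.mul_im, him, him]
    simp only [← Complex.ofReal_pow, Complex.ofReal_re, Complex.ofReal_im, zero_mul,
      mul_zero, sub_zero, zero_add, add_zero]
  have hzd1 : Complex.exp (Complex.I * ((δ : ℂ) + 1) * (θ : ℂ)) = z ^ ((δ : ℤ) + 1) := by
    rw [hzpow]
    congr 1
    push_cast; ring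
  rw [Finset.sum_congr rfl hre, ← Complex.im_sum, hsum]
  rw [Complex.sub_im, hQreal, sub_zero, hzd1, he2, hem2, ← hv, ← hu]
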